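/- If λ ∈ ℂ satisfies √2·|λ| = (2n+1)π for some integer n, then exp(−i·O′) equals the matrix with rows (0, −1, 0), (−1, 0, 0), (0, 0, −1). -/

import Mathlib

noncomputable section
open Matrix

/-- The interaction block `O′` associated with the coupling constant `λ`. -/
def Oprime (l : ℂ) : Matrix (Fin 3) (Fin 3) ℂ :=
  !![0, 0, -(starRingEnd ℂ) l;
     0, 0, -(starRingEnd ℂ) l;
     -l, -l, 0]

/-- At the critical coupling strengths `√2·|λ| = (2n+1)π`, the one-step interaction unitary
`exp(−i·O′)` equals the matrix with rows `(0,−1,0), (−1,0,0), (0,0,−1)`. -/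
theorem exp_interaction_critical (l : ℂ) (n : ℤ)
    (h : Real.sqrt 2 * ‖l‖ = (2 * n + 1) * Real.pi) :
    NormedSpace.exp ((-Complex.I) • Oprime l) =
      !![0, -1, 0;
         -1, 0, 0;
         0, 0, -1] := by
  have hpi := Real.pi_ne_zero
  have hodd : ((2 * n + 1 : ℤ) : ℝ) ≠ 0 := by
    exact_mod_cast (by omega : (2 * n + 1 : ℤ) ≠ 0)
  have hmne : ((2 * n + 1 : ℝ)) * Real.pi ≠ 0 := by
    push_cast at hodd; exact mul_ne_zero hodd hpi
  have hl : l ≠ 0 := by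
    intro h0
    rw [h0] at h
    simp at h
    push_cast at hodd; exact hodd (by linarith)
  have hcne : (starRingEnd ℂ) l ≠ 0 := by simpa using hl
  obtain ⟨m, hmdef⟩ : ∃ m : ℝ, m = (2 * (n:ℝ) + 1) * Real.pi := ⟨_, rfl⟩
  rw [← hmdef] at h hmne
  have hmC : (m : ℂ) ≠ 0 := by exact_mod_cast hmne
  have hm2 : (m : ℂ) ^ 2 = 2 * (l * (starRingEnd ℂ) l) := by
    have h2 : (m : ℝ) ^ 2 = 2 * Complex.normSq l := by
      rw [← h]
      rw [mul_pow, Real.sq_sqrt (by norm_num : (0:ℝ) ≤ 2), Complex.sq_norm]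
    calc (m : ℂ) ^ 2 = ((m ^ 2 : ℝ) : ℂ) := by push_cast; ring
      _ = ((2 * Complex.normSq l : ℝ) : ℂ) := by rw [h2]
      _ = 2 * (l * (starRingEnd ℂ) l) := by push_cast; rw [Complex.mul_conj]
  set P : Matrix (Fin 3) (Fin 3) ℂ := !![1, (starRingEnd ℂ) l, (starRingEnd ℂ) l; -1, (starRingEnd ℂ) l, (starRingEnd ℂ) l; 0, -(m:ℂ), (m:ℂ)] with hP
  have hdet : P.det = 4 * (starRingEnd ℂ) l * (m : ℂ) := by
    simp [hP, Matrix.det_fin_three]; ring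
  have hdu : IsUnit P.det := by
    rw [hdet]; exact isUnit_iff_ne_zero.2 (by simp [hcne, hmC])
  have hPu : IsUnit P := (Matrix.isUnit_iff_isUnit_det P).2 hdu
  set D : Matrix (Fin 3) (Fin 3) ℂ :=
    Matrix.diagonal ![0, -Complex.I * (m:ℂ), Complex.I * (m:ℂ)] with hD
  have h2 : (2:ℂ) * (l * (starRingEnd ℂ) l) = (m:ℂ) ^ 2 := hm2.symm
  have key1 : ((-Complex.I) • Oprime l) * P = P * D := by
    ext i j
    fin_cases i <;> fin_cases j <;>
      simp [Oprime, hP, hD, Matrix.mul_apply, Fin.sum_univ_three, Matrix.diagonal,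
        mul_comm, mul_assoc, mul_left_comm] <;>
      first
      | linear_combination hm2
      | linear_combination -hm2
      | linear_combination Complex.I * hm2
      | linear_combination (-Complex.I) * hm2
      | (rw [h2]; ring)
  have hA : (-Complex.I) • Oprime l = P * D * P⁻¹ := by
    have := congrArg (· * P⁻¹) key1
    simpa [mul_assoc, Matrix.mul_nonsing_inv P hdu] using this
  have hexpI : Complex.exp (Complex.I * (m:ℂ)) = -1 := by
    have : Complex.I * (m : ℂ) = ((2 * n + 1 : ℤ) : ℂ) * (Real.pi * Complex.I) := by
      rw [hmdef]; push_cast; ring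
    rw [this, Complex.exp_int_mul, Complex.exp_pi_mul_I]
    exact Odd.neg_one_zpow ⟨n, by ring⟩
  have hexpnI : Complex.exp (-(Complex.I * (m:ℂ))) = -1 := by
    have : -(Complex.I * (m : ℂ)) = ((-(2 * n + 1) : ℤ) : ℂ) * (Real.pi * Complex.I) := by
      rw [hmdef]; push_cast; ring
    rw [this, Complex.exp_int_mul, Complex.exp_pi_mul_I]
    exact Odd.neg_one_zpow ⟨-n - 1, by ring⟩
  have hv : NormedSpace.exp (![0, -Complex.I * (m:ℂ), Complex.I * (m:ℂ)] : Fin 3 → ℂ) =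
      ![1, -1, -1] := by
    rw [Pi.exp_def]
    funext i
    fin_cases i <;>
      simp [← Complex.exp_eq_exp_ℂ, hexpI, hexpnI, neg_mul]
  have key2 : NormedSpace.exp D = Matrix.diagonal ![1, -1, -1] := by
    rw [hD, Matrix.exp_diagonal, hv]
  have key3 : P * Matrix.diagonal ![1, -1, -1] =
      (!![0, -1, 0; -1, 0, 0; 0, 0, -1] : Matrix (Fin 3) (Fin 3) ℂ) * P := by
    ext i j
    fin_cases i <;> fin_cases j <;>
      simp [hP, Matrix.mul_apply, Fin.sum_univ_three, Matrix.diagonal]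
  rw [hA, Matrix.exp_conj P D hPu, key2]
  calc P * Matrix.diagonal ![1, -1, -1] * P⁻¹
      = !![0, -1, 0; -1, 0, 0; 0, 0, -1] * (P * P⁻¹) := by rw [key3, mul_assoc]
    _ = _ := by rw [Matrix.mul_nonsing_inv P hdu, mul_one]
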